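/- For every real x ∈ [−1,1], |(2x + 1)/(x² + x + 1) − (x + 1)| ≤ 1, and equality holds at x = −1 and x = 1. Hence the supremum over [−1,1] of |ρ(x) − (x+1)| equals 1, where ρ(x) = (2x+1)/(x²+x+1). -/

import Mathlib

/-- The simple partial fraction `(2x+1)/(x²+x+1)` deviates from `x+1` on
`[-1,1]` by exactly 1. -/
theorem best_deviation_example :
    (∀ x ∈ Set.Icc (-1 : ℝ) 1, |(2 * x + 1) / (x ^ 2 + x + 1) - (x + 1)| ≤ 1) ∧
    |(2 * (-1 : ℝ) + 1) / ((-1 : ℝ) ^ 2 + (-1) + 1) - ((-1 : ℝ) + 1)| = 1 ∧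
    |(2 * (1 : ℝ) + 1) / ((1 : ℝ) ^ 2 + 1 + 1) - ((1 : ℝ) + 1)| = 1 ∧
    sSup ((fun x : ℝ => |(2 * x + 1) / (x ^ 2 + x + 1) - (x + 1)|) ''
      Set.Icc (-1 : ℝ) 1) = 1 := by
  have hbd : ∀ x ∈ Set.Icc (-1 : ℝ) 1,
      |(2 * x + 1) / (x ^ 2 + x + 1) - (x + 1)| ≤ 1 := by
    intro x hx
    obtain ⟨h1, h2⟩ := hx
    have hQ : (0 : ℝ) < x ^ 2 + x + 1 := by nlinarith [sq_nonneg (2 * x + 1)]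
    have heq : (2 * x + 1) / (x ^ 2 + x + 1) - (x + 1)
        = -(x ^ 2 * (x + 2)) / (x ^ 2 + x + 1) := by
      rw [eq_div_iff hQ.ne', sub_mul, div_mul_cancel₀ _ hQ.ne']
      ring
    rw [heq, abs_div, abs_of_pos hQ, div_le_one hQ, abs_neg,
      abs_of_nonneg (by nlinarith [sq_nonneg x] : (0:ℝ) ≤ x ^ 2 * (x + 2))]
    nlinarith [sq_nonneg (x + 1)]
  have hm1 : |(2 * (-1 : ℝ) + 1) / ((-1 : ℝ) ^ 2 + (-1) + 1) - ((-1 : ℝ) + 1)| = 1 := by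
    norm_num
  have hp1 : |(2 * (1 : ℝ) + 1) / ((1 : ℝ) ^ 2 + 1 + 1) - ((1 : ℝ) + 1)| = 1 := by
    norm_num
  refine ⟨hbd, hm1, hp1, ?_⟩
  apply le_antisymm
  · apply csSup_le
    · exact ⟨_, ⟨1, by norm_num, rfl⟩⟩
    · rintro y ⟨x, hx, rfl⟩
      exact hbd x hx
  · apply le_csSup
    · exact ⟨1, by rintro y ⟨x, hx, rfl⟩; exact hbd x hx⟩
    · exact ⟨1, by norm_num, by simpa using hp1⟩
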